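/- Spectral gap of the propagation Hamiltonian: With H_p built from unitaries U_1, …, U_T on W as above, the smallest nonzero eigenvalue of H_p equals 1 − cos(π/(T+1)), and in particular it is at least 2/(T+1)². Hence H_p has a spectral gap of order 1/T² above its zero-energy (history-state) subspace. -/

import Mathlib

open scoped BigOperators
set_option linter.unusedSectionVars false

noncomputable section

/-- `histFun T U t` is the composite `U_t ∘ U_{t-1} ∘ ⋯ ∘ U_1` of the first `t`
circuit unitaries (the empty composite for `t = 0` being the identity). -/
def histFun {W : Type*} [NormedAddCommGroup W] [InnerProductSpace ℂ W]
    (T : ℕ) (U : Fin T → (W ≃ₗᵢ[ℂ] W)) : ℕ → W → W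
  | 0 => id
  | n + 1 => if h : n < T then (fun w => U ⟨n, h⟩ (histFun T U n w)) else histFun T U n

/-- Feynman–Kitaev propagation Hamiltonian
`H_p = (1/2) ∑_{t=0}^{T-1} [(|t⟩⟨t| + |t+1⟩⟨t+1|) ⊗ 1 - |t+1⟩⟨t| ⊗ U_{t+1} - |t⟩⟨t+1| ⊗ U_{t+1}†]`
acting on `ℂ^{T+1} ⊗ W`, realized as the space of functions `Fin (T+1) → W`. -/
def propHam {W : Type*} [NormedAddCommGroup W] [InnerProductSpace ℂ W]
    (T : ℕ) (U : Fin T → (W ≃ₗᵢ[ℂ] W)) :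
    ((Fin (T + 1) → W) →ₗ[ℂ] (Fin (T + 1) → W)) :=
  (2 : ℂ)⁻¹ • ∑ t : Fin T,
    ((LinearMap.single ℂ (fun _ : Fin (T + 1) => W) t.castSucc) ∘ₗ
        ((LinearMap.proj t.castSucc : (∀ _ : Fin (T + 1), W) →ₗ[ℂ] W) -
          ((U t).symm.toLinearEquiv.toLinearMap ∘ₗ
            (LinearMap.proj t.succ : (∀ _ : Fin (T + 1), W) →ₗ[ℂ] W))) +
      (LinearMap.single ℂ (fun _ : Fin (T + 1) => W) t.succ) ∘ₗ
        ((LinearMap.proj t.succ : (∀ _ : Fin (T + 1), W) →ₗ[ℂ] W) -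
          ((U t).toLinearEquiv.toLinearMap ∘ₗ
            (LinearMap.proj t.castSucc : (∀ _ : Fin (T + 1), W) →ₗ[ℂ] W))))

namespace PropHamAux

variable {W : Type*} [NormedAddCommGroup W] [InnerProductSpace ℂ W]

/-- history unitaries as linear isometry equivalences -/
def histE (T : ℕ) (U : Fin T → (W ≃ₗᵢ[ℂ] W)) : ℕ → (W ≃ₗᵢ[ℂ] W)
  | 0 => LinearIsometryEquiv.refl ℂ W
  | n + 1 => if h : n < T then (histE T U n).trans (U ⟨n, h⟩) else histE T U n

lemma histE_succ (T : ℕ) (U : Fin T → (W ≃ₗᵢ[ℂ] W)) {n : ℕ} (h : n < T) :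
    histE T U (n + 1) = (histE T U n).trans (U ⟨n, h⟩) := by
  simp [histE, h]

lemma sum_single_castSucc (T : ℕ) (F : Fin T → W) (s : Fin (T + 1)) :
    (∑ t : Fin T, Pi.single (M := fun _ : Fin (T + 1) => W) t.castSucc (F t) s) =
      if h : (s : ℕ) < T then F ⟨s, h⟩ else 0 := by
  by_cases h : (s : ℕ) < T
  · rw [dif_pos h, Finset.sum_eq_single ⟨s, h⟩]
    · have hs : (Fin.castSucc (⟨s, h⟩ : Fin T)) = s := by ext; simp
      rw [hs, Pi.single_eq_same]
    · intro t _ ht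
      apply Pi.single_eq_of_ne
      intro hst
      exact ht (by ext; have := congrArg Fin.val hst; simpa using this.symm)
    · intro ht; exact absurd (Finset.mem_univ _) ht
  · rw [dif_neg h]
    refine Finset.sum_eq_zero fun t _ => ?_
    apply Pi.single_eq_of_ne
    intro hst
    have := congrArg Fin.val hst
    simp at this
    omega

lemma sum_single_succ (T : ℕ) (F : Fin T → W) (s : Fin (T + 1)) :
    (∑ t : Fin T, Pi.single (M := fun _ : Fin (T + 1) => W) t.succ (F t) s) =
      if h : 0 < (s : ℕ) then F ⟨(s : ℕ) - 1, by have := s.isLt; omega⟩ else 0 := by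
  by_cases h : 0 < (s : ℕ)
  · rw [dif_pos h, Finset.sum_eq_single ⟨(s : ℕ) - 1, by have := s.isLt; omega⟩]
    · have hs : (Fin.succ (⟨(s : ℕ) - 1, by have := s.isLt; omega⟩ : Fin T)) = s := by
        ext; simp; omega
      rw [hs, Pi.single_eq_same]
    · intro t _ ht
      apply Pi.single_eq_of_ne
      intro hst
      refine ht (Fin.ext ?_)
      have := congrArg Fin.val hst
      simp only [Fin.val_succ] at this
      show (t : ℕ) = (s : ℕ) - 1
      omega
    · intro ht; exact absurd (Finset.mem_univ _) ht
  · rw [dif_neg h]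
    refine Finset.sum_eq_zero fun t _ => ?_
    apply Pi.single_eq_of_ne
    intro hst
    have := congrArg Fin.val hst
    simp at this
    omega

lemma propHam_apply (T : ℕ) (U : Fin T → (W ≃ₗᵢ[ℂ] W)) (ψ : Fin (T + 1) → W)
    (s : Fin (T + 1)) :
    propHam T U ψ s = (2 : ℂ)⁻¹ •
      ((if h : (s : ℕ) < T then
          ψ s - (U ⟨s, h⟩).symm (ψ ⟨(s : ℕ) + 1, by omega⟩) else 0) +
       (if h : 0 < (s : ℕ) then
          ψ s - (U ⟨(s : ℕ) - 1, by have := s.isLt; omega⟩)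
            (ψ ⟨(s : ℕ) - 1, by have := s.isLt; omega⟩) else 0)) := by
  rw [propHam]
  simp only [LinearMap.smul_apply, LinearMap.coe_sum, Finset.sum_apply,
    LinearMap.add_apply, LinearMap.comp_apply, LinearMap.sub_apply, LinearMap.proj_apply,
    LinearMap.coe_single, Pi.smul_apply, LinearIsometryEquiv.coe_toLinearEquiv,
    LinearEquiv.coe_coe, Pi.add_apply]
  rw [Finset.sum_add_distrib]
  rw [sum_single_castSucc T (fun t => ψ t.castSucc - (U t).symm (ψ t.succ)) s]
  rw [sum_single_succ T (fun t => ψ t.succ - (U t) (ψ t.castSucc)) s]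
  simp only [Fin.castSucc_mk, Fin.succ_mk, Fin.eta]
  by_cases h2 : 0 < (s : ℕ)
  · simp only [dif_pos h2, Nat.sub_add_cancel h2, Fin.eta]
  · simp only [dif_neg h2]

lemma propHam_eigen (T : ℕ) (U : Fin T → (W ≃ₗᵢ[ℂ] W)) (c : ℕ → ℂ) (lam : ℂ) (w : W)
    (hrec : ∀ s : Fin (T + 1),
      (if (s : ℕ) < T then c s - c ((s : ℕ) + 1) else 0) +
        (if 0 < (s : ℕ) then c s - c ((s : ℕ) - 1) else 0) = 2 * lam * c s) :
    propHam T U (fun s : Fin (T + 1) => c s • histE T U (s : ℕ) w) =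
      lam • fun s : Fin (T + 1) => c s • histE T U (s : ℕ) w := by
  funext s
  rw [propHam_apply]
  have hb1 : (if h : (s : ℕ) < T then
      c s • histE T U (s : ℕ) w - (U ⟨s, h⟩).symm (c ((s : ℕ) + 1) • histE T U ((s : ℕ) + 1) w)
      else 0) = (if (s : ℕ) < T then c s - c ((s : ℕ) + 1) else 0) • histE T U (s : ℕ) w := by
    by_cases h : (s : ℕ) < T
    · rw [dif_pos h, if_pos h, histE_succ T U h]
      simp only [LinearIsometryEquiv.map_smul, LinearIsometryEquiv.trans_apply,
        LinearIsometryEquiv.symm_apply_apply, sub_smul]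
    · rw [dif_neg h, if_neg h, zero_smul]
  have hb2 : (if h : 0 < (s : ℕ) then
      c s • histE T U (s : ℕ) w - (U ⟨(s : ℕ) - 1, by have := s.isLt; omega⟩)
        (c ((s : ℕ) - 1) • histE T U ((s : ℕ) - 1) w)
      else 0) = (if 0 < (s : ℕ) then c s - c ((s : ℕ) - 1) else 0) • histE T U (s : ℕ) w := by
    by_cases h : 0 < (s : ℕ)
    · rw [dif_pos h, if_pos h]
      have hlt : (s : ℕ) - 1 < T := by have := s.isLt; omega
      have hst : histE T U (((s : ℕ) - 1) + 1) = (histE T U ((s : ℕ) - 1)).trans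
          (U ⟨(s : ℕ) - 1, hlt⟩) := histE_succ T U hlt
      have hs1 : ((s : ℕ) - 1) + 1 = (s : ℕ) := by omega
      rw [hs1] at hst
      rw [hst]
      simp only [LinearIsometryEquiv.map_smul, LinearIsometryEquiv.trans_apply, sub_smul]
    · rw [dif_neg h, if_neg h, zero_smul]
  show (2 : ℂ)⁻¹ • _ = lam • (c s • histE T U (s : ℕ) w)
  rw [hb1, hb2, ← add_smul, hrec s, smul_smul, smul_smul]
  congr 1
  ring

open Real in
lemma scalar_rec (T k : ℕ) (hT : 1 ≤ T) (u : ℝ) (hu : 2 * ((T : ℝ) + 1) * u = k * π)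
    (n : ℕ) (hn : n ≤ T) :
    (if n < T then cos ((2 * (n : ℝ) + 1) * u) - cos ((2 * (n : ℝ) + 3) * u) else 0) +
      (if 0 < n then cos ((2 * (n : ℝ) + 1) * u) - cos ((2 * (n : ℝ) - 1) * u) else 0) =
      2 * (1 - cos (2 * u)) * cos ((2 * (n : ℝ) + 1) * u) := by
  by_cases h1 : n < T <;> by_cases h2 : 0 < n
  · rw [if_pos h1, if_pos h2]
    have e1 : (2 * (n : ℝ) + 3) * u = (2 * (n : ℝ) + 1) * u + 2 * u := by ring
    have e2 : (2 * (n : ℝ) - 1) * u = (2 * (n : ℝ) + 1) * u - 2 * u := by ring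
    rw [e1, e2, Real.cos_add, Real.cos_sub]
    ring
  · -- n = 0
    have hn0 : n = 0 := by omega
    subst hn0
    rw [if_pos h1, if_neg h2]
    norm_num
    rw [show (3 : ℝ) * u = 2 * u + u by ring, Real.cos_add, Real.sin_two_mul,
      Real.cos_two_mul]
    linear_combination (2 * Real.cos u) * Real.sin_sq_add_cos_sq u
  · -- n = T
    have hnT : n = T := by omega
    subst hnT
    rw [if_neg h1, if_pos h2]
    have e1 : (2 * (n : ℝ) + 1) * u = k * π - u := by linear_combination hu
    have e2 : (2 * (n : ℝ) - 1) * u = k * π - 3 * u := by linear_combination hu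
    rw [e1, e2, Real.cos_nat_mul_pi_sub, Real.cos_nat_mul_pi_sub,
      show (3 : ℝ) * u = 2 * u + u by ring, Real.cos_add, Real.sin_two_mul,
      Real.cos_two_mul]
    linear_combination ((-1 : ℝ) ^ k * 2 * Real.cos u) * Real.sin_sq_add_cos_sq u
  · omega

/-- the scalar coefficient sequence -/
def cc (u : ℝ) (n : ℕ) : ℂ := ((Real.cos ((2 * (n : ℝ) + 1) * u) : ℝ) : ℂ)

lemma scalar_recC (T k : ℕ) (hT : 1 ≤ T) (u : ℝ) (hu : 2 * ((T : ℝ) + 1) * u = k * Real.pi)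
    (s : Fin (T + 1)) :
    (if (s : ℕ) < T then cc u s - cc u ((s : ℕ) + 1) else 0) +
      (if 0 < (s : ℕ) then cc u s - cc u ((s : ℕ) - 1) else 0) =
      2 * ((1 - Real.cos (2 * u) : ℝ) : ℂ) * cc u s := by
  have h := scalar_rec T k hT u hu s (Nat.lt_succ_iff.mp s.isLt)
  have e1 : cc u ((s : ℕ) + 1) = ((Real.cos ((2 * ((s : ℕ) : ℝ) + 3) * u) : ℝ) : ℂ) := by
    unfold cc; congr 2; push_cast; ring
  have e2 : 0 < (s : ℕ) → cc u ((s : ℕ) - 1) =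
      ((Real.cos ((2 * ((s : ℕ) : ℝ) - 1) * u) : ℝ) : ℂ) := by
    intro h2; unfold cc; congr 2
    rw [Nat.cast_sub (by omega)]; push_cast; ring
  by_cases h1 : (s : ℕ) < T <;> by_cases h2 : 0 < (s : ℕ)
  · rw [if_pos h1, if_pos h2] at h ⊢
    rw [e1, e2 h2]
    unfold cc
    exact_mod_cast h
  · rw [if_pos h1, if_neg h2] at h ⊢
    rw [e1]
    unfold cc
    exact_mod_cast h
  · rw [if_neg h1, if_pos h2] at h ⊢
    rw [e2 h2]
    unfold cc
    exact_mod_cast h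
  · omega

lemma hasEigenvector_propHam (T : ℕ) (hT : 1 ≤ T) (U : Fin T → (W ≃ₗᵢ[ℂ] W))
    (k : ℕ) (hk : k ≤ T) (w : W) (hw : w ≠ 0) :
    Module.End.HasEigenvector (propHam T U)
      (((1 - Real.cos ((k : ℝ) * Real.pi / ((T : ℝ) + 1)) : ℝ) : ℂ))
      (fun s : Fin (T + 1) =>
        cc ((k : ℝ) * Real.pi / (2 * ((T : ℝ) + 1))) (s : ℕ) • histE T U (s : ℕ) w) := by
  set u : ℝ := (k : ℝ) * Real.pi / (2 * ((T : ℝ) + 1)) with hudef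
  have hT1 : ((T : ℝ) + 1) ≠ 0 := by positivity
  have hu : 2 * ((T : ℝ) + 1) * u = k * Real.pi := by
    rw [hudef]; field_simp
  have hlam : (k : ℝ) * Real.pi / ((T : ℝ) + 1) = 2 * u := by
    rw [hudef]; field_simp
  constructor
  · rw [Module.End.mem_eigenspace_iff, hlam]
    exact propHam_eigen T U (cc u) _ w (scalar_recC T k hT u hu)
  · intro h0
    have h00 := congrFun h0 0
    have hE0 : histE T U ((0 : Fin (T + 1)) : ℕ) w = w := by
      show histE T U 0 w = w
      simp [histE]
    have hc0 : cc u ((0 : Fin (T + 1)) : ℕ) = ((Real.cos u : ℝ) : ℂ) := by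
      show cc u 0 = _
      unfold cc; norm_num
    rw [Pi.zero_apply, hc0, hE0] at h00
    have hcos : 0 < Real.cos u := by
      apply Real.cos_pos_of_mem_Ioo
      constructor
      · have : 0 ≤ u := by rw [hudef]; positivity
        linarith [Real.pi_pos]
      · rw [hudef, div_lt_div_iff₀ (by positivity) (by norm_num)]
        have : (k : ℝ) < (T : ℝ) + 1 := by exact_mod_cast Nat.lt_succ_of_le hk
        nlinarith [Real.pi_pos]
    rcases smul_eq_zero.mp h00 with h | h
    · exact absurd (Complex.ofReal_eq_zero.mp h) (ne_of_gt hcos)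
    · exact hw h

/-- scalar reduction: any eigenvalue of `propHam T U` is an eigenvalue of the scalar
propagation Hamiltonian (all unitaries trivial, on `W = ℂ`). -/
lemma eigenvalue_scalar (T : ℕ) (U : Fin T → (W ≃ₗᵢ[ℂ] W)) {μ : ℂ}
    (hμ : Module.End.HasEigenvalue (propHam T U) μ) :
    Module.End.HasEigenvalue
      (propHam T (fun _ : Fin T => LinearIsometryEquiv.refl ℂ ℂ)) μ := by
  obtain ⟨ψ, hmem, hne⟩ := hμ.exists_hasEigenvector
  have hψ : propHam T U ψ = μ • ψ := Module.End.mem_eigenspace_iff.mp hmem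
  set φ : Fin (T + 1) → W := fun s => (histE T U (s : ℕ)).symm (ψ s) with hφdef
  obtain ⟨s₀, hs₀⟩ : ∃ s, ψ s ≠ 0 := Function.ne_iff.mp hne
  have hφ0 : φ s₀ ≠ 0 := by
    simp only [hφdef]
    simpa using hs₀
  set y : Fin (T + 1) → ℂ := fun s => (inner ℂ (φ s₀) (φ s) : ℂ) with hydef
  have key : propHam T (fun _ : Fin T => LinearIsometryEquiv.refl ℂ ℂ) y = μ • y := by
    funext s
    -- the linear functional
    set F : W →ₗ[ℂ] ℂ :=
      { toFun := fun x => (inner ℂ (φ s₀) ((histE T U (s : ℕ)).symm x) : ℂ)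
        map_add' := fun x z => by simp [inner_add_right]
        map_smul' := fun a x => by simp [inner_smul_right] } with hFdef
    have hFψ : ∀ t : Fin (T + 1), (t : ℕ) = (s : ℕ) → F (ψ t) = y t := by
      intro t ht
      simp only [hFdef, hydef, LinearMap.coe_mk, AddHom.coe_mk, hφdef, ht]
    have h1 := congrFun hψ s
    rw [propHam_apply, Pi.smul_apply] at h1
    have hF := congrArg F h1
    rw [map_smul, map_add, map_smul, apply_dite F, apply_dite F] at hF
    simp only [map_sub, map_zero] at hF
    rw [propHam_apply, Pi.smul_apply]
    simp only [show ((LinearIsometryEquiv.refl ℂ ℂ).symm : ℂ → ℂ) = id from rfl, id_eq]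
    have hsucc : ∀ (h : (s : ℕ) < T) (t : Fin (T + 1)), (t : ℕ) = (s : ℕ) + 1 →
        F ((U ⟨s, h⟩).symm (ψ t)) = y t := by
      intro h t ht
      simp only [hFdef, LinearMap.coe_mk, AddHom.coe_mk, hydef, hφdef, ht]
      rw [histE_succ T U h]
      rfl
    have hpred : ∀ (h : 0 < (s : ℕ)) (p : (s : ℕ) - 1 < T) (t : Fin (T + 1)),
        (t : ℕ) = (s : ℕ) - 1 → F ((U ⟨(s : ℕ) - 1, p⟩) (ψ t)) = y t := by
      intro h p t ht
      simp only [hFdef, LinearMap.coe_mk, AddHom.coe_mk, hydef, hφdef, ht]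
      rw [show histE T U (s : ℕ) = histE T U (((s : ℕ) - 1) + 1) from by
        congr 1; omega, histE_succ T U p]
      have : ∀ x, ((histE T U ((s : ℕ) - 1)).trans (U ⟨(s : ℕ) - 1, p⟩)).symm x =
          (histE T U ((s : ℕ) - 1)).symm ((U ⟨(s : ℕ) - 1, p⟩).symm x) := fun _ => rfl
      rw [this, LinearIsometryEquiv.symm_apply_apply]
    by_cases h1s : (s : ℕ) < T <;> by_cases h2s : 0 < (s : ℕ)
    · rw [dif_pos h1s, dif_pos h2s] at hF ⊢
      rw [hFψ s rfl, hsucc h1s _ rfl, hpred h2s _ _ rfl] at hF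
      exact hF
    · rw [dif_pos h1s, dif_neg h2s] at hF ⊢
      rw [hFψ s rfl, hsucc h1s _ rfl] at hF
      exact hF
    · rw [dif_neg h1s, dif_pos h2s] at hF ⊢
      rw [hFψ s rfl, hpred h2s _ _ rfl] at hF
      exact hF
    · rw [dif_neg h1s, dif_neg h2s] at hF ⊢
      rw [hFψ s rfl] at hF
      exact hF
  have hy0 : y ≠ 0 := by
    intro h
    have := congrFun h s₀
    rw [hydef] at this
    simp only [Pi.zero_apply] at this
    exact hφ0 (inner_self_eq_zero.mp this)
  exact Module.End.hasEigenvalue_of_hasEigenvector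
    ⟨Module.End.mem_eigenspace_iff.mpr key, hy0⟩

lemma lam_injective (T : ℕ) : Function.Injective (fun k : Fin (T + 1) =>
    (((1 - Real.cos (((k : ℕ) : ℝ) * Real.pi / ((T : ℝ) + 1)) : ℝ)) : ℂ)) := by
  intro j k h
  simp only [Complex.ofReal_inj, sub_right_inj] at h
  have hT1 : (0 : ℝ) < (T : ℝ) + 1 := by positivity
  have mem : ∀ m : Fin (T + 1), ((m : ℕ) : ℝ) * Real.pi / ((T : ℝ) + 1) ∈
      Set.Icc (0 : ℝ) Real.pi := by
    intro m
    constructor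
    · positivity
    · rw [div_le_iff₀ hT1]
      have : ((m : ℕ) : ℝ) ≤ (T : ℝ) + 1 := by
        have := m.isLt
        exact_mod_cast Nat.le_of_lt_succ this |>.trans (Nat.le_succ T)
      nlinarith [Real.pi_pos]
  have := Real.injOn_cos (mem j) (mem k) h
  have hπ := Real.pi_ne_zero
  ext
  rw [div_left_inj' hT1.ne', mul_left_inj' hπ] at this
  exact_mod_cast this
  
/-- every eigenvalue of the propagation Hamiltonian is of the form `1 - cos (kπ/(T+1))`. -/
lemma eigenvalue_eq (T : ℕ) (hT : 1 ≤ T) (U : Fin T → (W ≃ₗᵢ[ℂ] W)) {μ : ℂ}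
    (hμ : Module.End.HasEigenvalue (propHam T U) μ) :
    ∃ k : Fin (T + 1),
      μ = (((1 - Real.cos (((k : ℕ) : ℝ) * Real.pi / ((T : ℝ) + 1)) : ℝ)) : ℂ) := by
  by_contra hno
  push_neg at hno
  have hμ0 := eigenvalue_scalar T U hμ
  obtain ⟨y, hymem, hyne⟩ := hμ0.exists_hasEigenvector
  set A₀ := propHam T (fun _ : Fin T => LinearIsometryEquiv.refl ℂ ℂ) with hA₀
  set lam : Fin (T + 1) → ℂ := fun k =>
    (((1 - Real.cos (((k : ℕ) : ℝ) * Real.pi / ((T : ℝ) + 1)) : ℝ)) : ℂ) with hlamdef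
  set μf : Option (Fin (T + 1)) → ℂ := fun o => o.elim μ lam with hμf
  set vf : Option (Fin (T + 1)) → (Fin (T + 1) → ℂ) := fun o =>
    o.elim y (fun k => fun s : Fin (T + 1) =>
      cc (((k : ℕ) : ℝ) * Real.pi / (2 * ((T : ℝ) + 1))) (s : ℕ) •
        histE T (fun _ : Fin T => LinearIsometryEquiv.refl ℂ ℂ) (s : ℕ) (1 : ℂ)) with hvf
  have hinj : Function.Injective μf := by
    intro a b hab
    match a, b with
    | none, none => rfl
    | none, some k => exact absurd hab (hno k)
    | some k, none => exact absurd hab.symm (hno k)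
    | some j, some k => exact congrArg some (lam_injective T hab)
  have hev : ∀ o, Module.End.HasEigenvector A₀ (μf o) (vf o) := by
    intro o
    match o with
    | none => exact ⟨hymem, hyne⟩
    | some k =>
      exact hasEigenvector_propHam T hT _ (k : ℕ) (Nat.le_of_lt_succ k.isLt) (1 : ℂ)
        one_ne_zero
  have hli := Module.End.eigenvectors_linearIndependent' A₀ μf hinj vf hev
  have hcard := hli.fintype_card_le_finrank
  rw [Module.finrank_fin_fun] at hcard
  simp [Fintype.card_option] at hcard

end PropHamAux

/-- **Spectral gap of the propagation Hamiltonian.**  The smallest nonzero eigenvalue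
of `H_p` equals `1 - cos(π/(T+1))`, which is at least `2/(T+1)²`; hence `H_p` has a
spectral gap of order `1/T²` above its zero-energy (history-state) subspace. -/
theorem propHam_gap {W : Type*} [NormedAddCommGroup W] [InnerProductSpace ℂ W]
    [FiniteDimensional ℂ W] [Nontrivial W] (T : ℕ) (hT : 1 ≤ T)
    (U : Fin T → (W ≃ₗᵢ[ℂ] W)) :
    Module.End.HasEigenvalue (propHam T U)
      ((1 - Real.cos (Real.pi / ((T : ℝ) + 1)) : ℝ) : ℂ) ∧
    (∀ μ : ℂ, Module.End.HasEigenvalue (propHam T U) μ → μ ≠ 0 →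
      1 - Real.cos (Real.pi / ((T : ℝ) + 1)) ≤ μ.re) ∧
    2 / ((T : ℝ) + 1) ^ 2 ≤ 1 - Real.cos (Real.pi / ((T : ℝ) + 1)) := by
  have hπ := Real.pi_pos
  have hT1 : (0 : ℝ) < (T : ℝ) + 1 := by positivity
  refine ⟨?_, ?_, ?_⟩
  · obtain ⟨w, hw⟩ := exists_ne (0 : W)
    have h := Module.End.hasEigenvalue_of_hasEigenvector
      (PropHamAux.hasEigenvector_propHam T hT U 1 hT w hw)
    simpa using h
  · intro μ hμ hμ0
    obtain ⟨k, hk⟩ := PropHamAux.eigenvalue_eq T hT U hμ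
    have hk0 : 1 ≤ (k : ℕ) := by
      rcases Nat.eq_zero_or_pos (k : ℕ) with h0 | h0
      · exfalso
        rw [hk, h0] at hμ0
        simp at hμ0
      · exact h0
    rw [hk, Complex.ofReal_re]
    have hkT : (k : ℕ) ≤ T := Nat.le_of_lt_succ k.isLt
    have hcos : Real.cos (((k : ℕ) : ℝ) * Real.pi / ((T : ℝ) + 1)) ≤
        Real.cos (Real.pi / ((T : ℝ) + 1)) := by
      apply Real.cos_le_cos_of_nonneg_of_le_pi
      · positivity
      · rw [div_le_iff₀ hT1]
        have : ((k : ℕ) : ℝ) ≤ (T : ℝ) + 1 := by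
          have : ((k : ℕ) : ℝ) ≤ (T : ℝ) := by exact_mod_cast hkT
          linarith
        nlinarith
      · rw [div_le_div_iff₀ hT1 hT1]
        have h1k : (1 : ℝ) ≤ ((k : ℕ) : ℝ) := by exact_mod_cast hk0
        nlinarith [mul_nonneg (mul_nonneg (sub_nonneg.mpr h1k) hπ.le) hT1.le]
    linarith
  · have hx : |Real.pi / ((T : ℝ) + 1)| ≤ Real.pi := by
      rw [abs_of_pos (by positivity), div_le_iff₀ hT1]
      nlinarith
    have h := Real.cos_le_one_sub_mul_cos_sq hx
    have he : 2 / Real.pi ^ 2 * (Real.pi / ((T : ℝ) + 1)) ^ 2 = 2 / ((T : ℝ) + 1) ^ 2 := by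
      field_simp
    rw [he] at h
    linarith

end
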